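/- Let 𝔞 be a nonzero squarefree ideal of ℤ[i] and let d(𝔞) be the smallest positive integer divisible by 𝔞 (i.e., the positive generator of 𝔞 ∩ ℤ). Then d(𝔞) ≤ N(𝔞) ≤ d(𝔞)². -/

import Mathlib

/-- The absolute norm of an ideal of `ℤ[i]`, as the cardinality of the quotient ring. -/
noncomputable def idealNorm (𝔞 : Ideal GaussianInt) : ℕ :=
  Nat.card (GaussianInt ⧸ 𝔞)

/-- `ℤ[i]` is additively `ℤ²`. -/
def gaussAddEquiv : GaussianInt ≃+ (Fin 2 → ℤ) where
  toFun z := ![z.re, z.im]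
  invFun f := ⟨f 0, f 1⟩
  left_inv z := by simp
  right_inv f := by ext i; fin_cases i <;> simp
  map_add' z w := by funext i; fin_cases i <;> simp [Zsqrtd.re_add, Zsqrtd.im_add]

noncomputable def gaussBasis : Module.Basis (Fin 2) ℤ GaussianInt :=
  Module.Basis.ofEquivFun gaussAddEquiv.toIntLinearEquiv

instance : Module.Free ℤ GaussianInt := Module.Free.of_basis gaussBasis
instance : Module.Finite ℤ GaussianInt := Module.Finite.of_basis gaussBasis

theorem stmt2 (𝔞 : Ideal GaussianInt) (h0 : 𝔞 ≠ ⊥) (hsq : Squarefree 𝔞)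
    (d : ℕ) (hd : 0 < d)
    (hgen : Ideal.comap (Int.castRingHom GaussianInt) 𝔞 = Ideal.span {(d : ℤ)}) :
    d ≤ idealNorm 𝔞 ∧ idealNorm 𝔞 ≤ d ^ 2 := by
  have key : idealNorm 𝔞 = Ideal.absNorm 𝔞 := by
    rw [idealNorm, Ideal.absNorm_apply, Submodule.cardQuot_apply]
  have hN0 : Ideal.absNorm 𝔞 ≠ 0 := fun h => h0 (Ideal.absNorm_eq_zero_iff.mp h)
  have hmem : ((d : ℤ) : GaussianInt) ∈ 𝔞 := by
    have : (d : ℤ) ∈ Ideal.comap (Int.castRingHom GaussianInt) 𝔞 := by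
      rw [hgen]; exact Ideal.mem_span_singleton_self _
    exact this
  constructor
  · -- d ≤ N(𝔞): N(𝔞) ∈ 𝔞 ∩ ℤ = (d), so d ∣ N(𝔞)
    have hmem2 : ((Ideal.absNorm 𝔞 : ℤ)) ∈ Ideal.comap (Int.castRingHom GaussianInt) 𝔞 := by
      have := Ideal.absNorm_mem 𝔞
      simpa using this
    rw [hgen, Ideal.mem_span_singleton] at hmem2
    have hdvd : d ∣ Ideal.absNorm 𝔞 := by exact_mod_cast hmem2
    rw [key]
    exact Nat.le_of_dvd (Nat.pos_of_ne_zero hN0) hdvd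
  · -- N(𝔞) ≤ d²: 𝔞 ∣ (d), so N(𝔞) ∣ N((d)) = d²
    have hdvd : (Ideal.absNorm 𝔞 : ℤ) ∣ Algebra.norm ℤ ((d : ℤ) : GaussianInt) :=
      Ideal.absNorm_dvd_norm_of_mem hmem
    have hnorm : Algebra.norm ℤ ((d : ℤ) : GaussianInt) = (d : ℤ) ^ 2 := by
      have := Algebra.norm_algebraMap_of_basis (R := ℤ) gaussBasis (d : ℤ)
      simpa using this
    rw [hnorm] at hdvd
    have hdvd' : Ideal.absNorm 𝔞 ∣ d ^ 2 := by exact_mod_cast hdvd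
    rw [key]
    exact Nat.le_of_dvd (by positivity) hdvd'
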